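/- Let β ≥ 0 and let θ : ℕ → ℝ satisfy θ_i ≥ 0 for all i and Σ_i θ_i² < ∞, and assume that β > 0 or Σ_i θ_i = ∞. Then Ψ(t)/t → ∞ as t → ∞, where Ψ(t) = (β/2)t² + Σ_i (e^{−θ_i t} − 1 + θ_i t). -/

import Mathlib

open Real Filter

lemma f_nonneg (x : ℝ) : 0 ≤ Real.exp (-x) - 1 + x := by
  have := Real.add_one_le_exp (-x); linarith

lemma exp_quad (x : ℝ) (hx : 0 ≤ x) : Real.exp (-x) - 1 + x ≤ x ^ 2 / 2 := by
  have H : ∀ y : ℝ, HasDerivAt (fun y => (1 - y + y ^ 2 / 2) * Real.exp y)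
      ((y ^ 2 / 2) * Real.exp y) y := by
    intro y
    have h1 : HasDerivAt (fun y : ℝ => 1 - y + y ^ 2 / 2) (-1 + y) y := by
      have := ((hasDerivAt_id y).const_sub 1).add ((hasDerivAt_pow 2 y).div_const 2)
      exact this.congr_deriv (by norm_num)
    have := h1.mul (Real.hasDerivAt_exp y)
    exact this.congr_deriv (by ring)
  have mono : MonotoneOn (fun y => (1 - y + y ^ 2 / 2) * Real.exp y) (Set.Ici (0:ℝ)) := by
    apply monotoneOn_of_deriv_nonneg (convex_Ici 0) (Continuous.continuousOn (by continuity))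
    · intro y hy
      exact (H y).differentiableAt.differentiableWithinAt
    · intro y hy
      rw [(H y).deriv]
      positivity
  have h0 : (1:ℝ) ≤ (1 - x + x ^ 2 / 2) * Real.exp x := by
    have := mono (Set.self_mem_Ici) (Set.mem_Ici.2 hx) hx
    simpa using this
  have hex : (0:ℝ) < Real.exp x := Real.exp_pos x
  have : Real.exp (-x) ≤ 1 - x + x ^ 2 / 2 := by
    rw [Real.exp_neg, inv_le_iff_one_le_mul₀ hex]
    linarith [h0]
  linarith

lemma summable_f (θ : ℕ → ℝ) (hθ : ∀ i, 0 ≤ θ i) (hθ2 : Summable fun i => (θ i) ^ 2)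
    (t : ℝ) (ht : 0 ≤ t) :
    Summable (fun i => Real.exp (-(θ i * t)) - 1 + θ i * t) := by
  apply Summable.of_nonneg_of_le (fun i => f_nonneg _) (fun i => ?_) (hθ2.mul_right (t^2/2))
  have := exp_quad (θ i * t) (mul_nonneg (hθ i) ht)
  calc Real.exp (-(θ i * t)) - 1 + θ i * t ≤ (θ i * t)^2/2 := this
    _ = θ i ^ 2 * (t^2/2) := by ring

/-- For `β ≥ 0`, nonnegative `θ` with `∑ θ i ^ 2 < ∞`, and `β > 0` or
`∑ θ i = ∞`, we have `Ψ(t)/t → ∞` as `t → ∞`, where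
`Ψ(t) = (β/2) t² + ∑' i, (exp (−θ i t) − 1 + θ i t)`. -/
theorem psi_div_t_tendsto_atTop
    (β : ℝ) (hβ : 0 ≤ β) (θ : ℕ → ℝ) (hθ : ∀ i, 0 ≤ θ i)
    (hθ2 : Summable fun i => (θ i) ^ 2)
    (hass : 0 < β ∨ ¬ Summable θ) :
    Filter.Tendsto
      (fun t : ℝ =>
        (β / 2 * t ^ 2 + ∑' i, (Real.exp (-(θ i * t)) - 1 + θ i * t)) / t)
      Filter.atTop Filter.atTop := by
  rw [Filter.tendsto_atTop]
  intro M
  rcases hass with hβ' | hdiv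
  · filter_upwards [eventually_ge_atTop (max 1 (2 * M / β))] with t ht
    have ht1 : (1:ℝ) ≤ t := le_trans (le_max_left _ _) ht
    have ht0 : (0:ℝ) < t := lt_of_lt_of_le one_pos ht1
    have htM : 2 * M / β ≤ t := le_trans (le_max_right _ _) ht
    have hS : 0 ≤ ∑' i, (Real.exp (-(θ i * t)) - 1 + θ i * t) :=
      tsum_nonneg (fun i => f_nonneg _)
    have h1 : β / 2 * t ≤ (β / 2 * t ^ 2 + ∑' i, (Real.exp (-(θ i * t)) - 1 + θ i * t)) / t := by
      rw [le_div_iff₀ ht0]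
      nlinarith
    have h2 : M ≤ β / 2 * t := by
      rw [div_le_iff₀ hβ'] at htM
      nlinarith
    linarith
  · -- partial sums of θ tend to ∞
    have hsum := (not_summable_iff_tendsto_nat_atTop_of_nonneg hθ).1 hdiv
    obtain ⟨n, hn⟩ := (Filter.tendsto_atTop.1 hsum (M + 1)).exists
    -- the finite sum over range n, divided by t, tends to ∑ θ i
    have hterm : ∀ i : ℕ, Filter.Tendsto
        (fun t : ℝ => (Real.exp (-(θ i * t)) - 1 + θ i * t) / t) atTop (nhds (θ i)) := by
      intro i
      have h0 : Filter.Tendsto (fun t : ℝ => (Real.exp (-(θ i * t)) - 1) / t) atTop (nhds 0) := by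
        apply tendsto_of_tendsto_of_tendsto_of_le_of_le'
          (by simpa using (tendsto_inv_atTop_zero (𝕜 := ℝ)).neg)
          (tendsto_const_nhds (α := ℝ) (x := (0:ℝ)))
        · filter_upwards [eventually_gt_atTop (0:ℝ)] with t ht
          have hnum : (-1:ℝ) ≤ Real.exp (-(θ i * t)) - 1 := by
            have := Real.exp_pos (-(θ i * t)); linarith
          calc -t⁻¹ = -1 / t := by rw [neg_div, one_div]
            _ ≤ (Real.exp (-(θ i * t)) - 1) / t := by gcongr
        · filter_upwards [eventually_ge_atTop (0:ℝ)] with t ht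
          apply div_nonpos_of_nonpos_of_nonneg _ ht
          have h1 : Real.exp (-(θ i * t)) ≤ 1 := by
            rw [Real.exp_le_one_iff]
            have := mul_nonneg (hθ i) ht
            linarith
          linarith
      have := h0.add (tendsto_const_nhds (x := θ i) (α := ℝ))
      rw [zero_add] at this
      apply this.congr'
      filter_upwards [eventually_gt_atTop (0:ℝ)] with t ht
      field_simp
    have hfin : Filter.Tendsto
        (fun t : ℝ => (∑ i ∈ Finset.range n, (Real.exp (-(θ i * t)) - 1 + θ i * t)) / t)
        atTop (nhds (∑ i ∈ Finset.range n, θ i)) := by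
      have := tendsto_finset_sum (Finset.range n) (fun i _ => hterm i)
      apply this.congr
      intro t
      rw [Finset.sum_div]
    have hev := hfin.eventually (eventually_gt_nhds (show M < ∑ i ∈ Finset.range n, θ i by linarith))
    filter_upwards [hev, eventually_gt_atTop (0:ℝ)] with t hgt ht0
    have hle : (∑ i ∈ Finset.range n, (Real.exp (-(θ i * t)) - 1 + θ i * t))
        ≤ β / 2 * t ^ 2 + ∑' i, (Real.exp (-(θ i * t)) - 1 + θ i * t) := by
      have h1 : (∑ i ∈ Finset.range n, (Real.exp (-(θ i * t)) - 1 + θ i * t))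
          ≤ ∑' i, (Real.exp (-(θ i * t)) - 1 + θ i * t) :=
        Summable.sum_le_tsum _ (fun i _ => f_nonneg _) (summable_f θ hθ hθ2 t ht0.le)
      nlinarith
    calc M ≤ (∑ i ∈ Finset.range n, (Real.exp (-(θ i * t)) - 1 + θ i * t)) / t := hgt.le
      _ ≤ _ := by gcongr
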